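/- The function f is continuous on (−∞, −μ), f(x) → −∞ as x → −∞, and f(x) → +∞ as x → −μ from the left. Consequently there exists a collinear equilibrium point x₃ ∈ (−∞, −μ) with f(x₃) = 0. -/

import Mathlib

set_option maxHeartbeats 1000000

open Filter Set

/-- Collinear equilibrium function of the generalized photogravitational
Chermnykh problem. -/
noncomputable def fcol (μ q₁ A₂ Mb T n x : ℝ) : ℝ :=
  n ^ 2 * x
    - (1 - μ) * q₁ * (x + μ) / |x + μ| ^ 3
    - μ * (x + μ - 1) / |x + μ - 1| ^ 3
    - (3 / 2) * μ * A₂ * (x + μ - 1) / |x + μ - 1| ^ 5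
    - Mb * x / (x ^ 2 + T ^ 2) ^ ((3 : ℝ) / 2)

lemma fcol_bound1 (u : ℝ) (m : ℕ) : ‖u / |u| ^ (m + 1)‖ ≤ (|u| ^ m)⁻¹ := by
  rcases eq_or_ne u 0 with h | h
  · simp [h]
  · have hu : (0 : ℝ) < |u| := abs_pos.mpr h
    rw [Real.norm_eq_abs, abs_div, abs_pow, abs_abs, pow_succ]
    refine le_of_eq ?_
    field_simp

lemma fcol_tendsto_inv_abs (a : ℝ) (m : ℕ) (hm : m ≠ 0) :
    Tendsto (fun x : ℝ => (|x + a| ^ m)⁻¹) atBot (nhds 0) :=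
  tendsto_inv_atTop_zero.comp ((tendsto_pow_atTop hm).comp
    (tendsto_abs_atBot_atTop.comp (tendsto_atBot_add_const_right _ a tendsto_id)))

lemma fcol_term_tendsto (c a : ℝ) (m : ℕ) (hm : m ≠ 0) :
    Tendsto (fun x : ℝ => c * (x + a) / |x + a| ^ (m + 1)) atBot (nhds 0) := by
  have hb := (fcol_tendsto_inv_abs a m hm).const_mul |c|
  rw [mul_zero] at hb
  refine squeeze_zero_norm (fun x => ?_) hb
  rw [mul_div_assoc, norm_mul, Real.norm_eq_abs c]
  exact mul_le_mul_of_nonneg_left (fcol_bound1 _ m) (abs_nonneg c)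

lemma fcol_contAt (μ q₁ A₂ Mb T n : ℝ) (hT : 0 < T) (x : ℝ)
    (h1 : x + μ ≠ 0) (h2 : x + μ - 1 ≠ 0) :
    ContinuousAt (fcol μ q₁ A₂ Mb T n) x := by
  have hab1 : |x + μ| ≠ 0 := abs_ne_zero.mpr h1
  have hab2 : |x + μ - 1| ≠ 0 := abs_ne_zero.mpr h2
  have hden : (0 : ℝ) < (x ^ 2 + T ^ 2) ^ ((3 : ℝ) / 2) :=
    Real.rpow_pos_of_pos (by positivity) _
  unfold fcol
  refine ContinuousAt.sub (ContinuousAt.sub (ContinuousAt.sub (ContinuousAt.sub ?_ ?_) ?_) ?_) ?_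
  · fun_prop
  · exact ContinuousAt.div (by fun_prop) (by fun_prop) (pow_ne_zero _ hab1)
  · exact ContinuousAt.div (by fun_prop) (by fun_prop) (pow_ne_zero _ hab2)
  · exact ContinuousAt.div (by fun_prop) (by fun_prop) (pow_ne_zero _ hab2)
  · exact ContinuousAt.div (by fun_prop)
      (ContinuousAt.rpow_const (by fun_prop) (Or.inr (by norm_num))) (ne_of_gt hden)

/-- On `(-∞, -μ)` the function `f` is continuous, tends to `-∞` at `-∞` and to `+∞`
as `x → -μ⁻`; consequently there is a collinear equilibrium point `x₃ < -μ`. -/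
theorem collinear_point_left
    (μ q₁ A₂ Mb T n : ℝ)
    (hμ0 : 0 < μ) (hμ1 : μ < 1 / 2) (hq0 : 0 < q₁) (hq1 : q₁ ≤ 1)
    (hA : 0 ≤ A₂) (hM : 0 ≤ Mb) (hT : 0 < T) (hn : 0 < n) :
    ContinuousOn (fcol μ q₁ A₂ Mb T n) (Set.Iio (-μ)) ∧
    Filter.Tendsto (fcol μ q₁ A₂ Mb T n) Filter.atBot Filter.atBot ∧
    Filter.Tendsto (fcol μ q₁ A₂ Mb T n) (nhdsWithin (-μ) (Set.Iio (-μ))) Filter.atTop ∧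
    ∃ x₃ ∈ Set.Iio (-μ), fcol μ q₁ A₂ Mb T n x₃ = 0 := by
  -- Part 1: continuity
  have hcont : ContinuousOn (fcol μ q₁ A₂ Mb T n) (Set.Iio (-μ)) := by
    intro x hx
    have hx' : x < -μ := hx
    exact (fcol_contAt μ q₁ A₂ Mb T n hT x (by intro h; nlinarith) (by intro h; nlinarith)).continuousWithinAt
  -- Part 2: atBot
  have h2 : Tendsto (fcol μ q₁ A₂ Mb T n) atBot atBot := by
    have hA1 : Tendsto (fun x : ℝ => (1 - μ) * q₁ * (x + μ) / |x + μ| ^ 3) atBot (nhds 0) :=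
      fcol_term_tendsto ((1 - μ) * q₁) μ 2 two_ne_zero
    have hB1 : Tendsto (fun x : ℝ => μ * (x + μ - 1) / |x + μ - 1| ^ 3) atBot (nhds 0) := by
      have := fcol_term_tendsto μ (μ - 1) 2 two_ne_zero
      refine this.congr fun x => ?_
      rw [show x + (μ - 1) = x + μ - 1 by ring]
    have hC1 : Tendsto (fun x : ℝ => 3 / 2 * μ * A₂ * (x + μ - 1) / |x + μ - 1| ^ 5) atBot (nhds 0) := by
      have := fcol_term_tendsto (3 / 2 * μ * A₂) (μ - 1) 4 (by norm_num)
      refine this.congr fun x => ?_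
      rw [show x + (μ - 1) = x + μ - 1 by ring]
    have hD1 : Tendsto (fun x : ℝ => Mb * x / (x ^ 2 + T ^ 2) ^ ((3 : ℝ) / 2)) atBot (nhds 0) := by
      have hsq : Tendsto (fun x : ℝ => x ^ 2) atBot atTop := by
        have := (tendsto_pow_atTop (α := ℝ) two_ne_zero).comp (tendsto_abs_atBot_atTop (G := ℝ))
        exact this.congr fun x => sq_abs x
      have hb := (tendsto_inv_atTop_zero.comp hsq).const_mul Mb
      rw [mul_zero] at hb
      refine squeeze_zero_norm' ?_ hb
      filter_upwards [eventually_le_atBot (-1 : ℝ)] with x hx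
      have hx0 : x ≠ 0 := by intro h; rw [h] at hx; norm_num at hx
      have habs : (0 : ℝ) < |x| := abs_pos.mpr hx0
      have hdpos : (0 : ℝ) < (x ^ 2 + T ^ 2) ^ ((3 : ℝ) / 2) :=
        Real.rpow_pos_of_pos (by positivity) _
      have key : |x| ^ 3 ≤ (x ^ 2 + T ^ 2) ^ ((3 : ℝ) / 2) := by
        have h1 : ((x ^ 2 : ℝ)) ^ ((3 : ℝ) / 2) = |x| ^ 3 := by
          rw [← sq_abs, ← Real.rpow_natCast |x| 2, ← Real.rpow_mul (abs_nonneg x),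
            ← Real.rpow_natCast |x| 3]
          norm_num
        rw [← h1]
        exact Real.rpow_le_rpow (sq_nonneg x) (by nlinarith [sq_nonneg T]) (by norm_num)
      have heq : Mb * |x| / |x| ^ 3 = Mb * (x ^ 2)⁻¹ := by
        rw [show |x| ^ 3 = x ^ 2 * |x| from by rw [pow_succ, sq_abs]]
        rw [mul_div_assoc, div_mul_cancel_right₀ (abs_ne_zero.mpr hx0)]
      calc ‖Mb * x / (x ^ 2 + T ^ 2) ^ ((3 : ℝ) / 2)‖
          = Mb * |x| / (x ^ 2 + T ^ 2) ^ ((3 : ℝ) / 2) := by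
            rw [Real.norm_eq_abs, abs_div, abs_mul, abs_of_nonneg hM, abs_of_pos hdpos]
        _ ≤ Mb * |x| / |x| ^ 3 :=
            div_le_div_of_nonneg_left (by positivity) (by positivity) key
        _ = Mb * (x ^ 2)⁻¹ := heq
    have hlin : Tendsto (fun x : ℝ => n ^ 2 * x) atBot atBot :=
      (tendsto_id.const_mul_atBot (by positivity))
    have hrest : Tendsto (fun x : ℝ =>
        -((1 - μ) * q₁ * (x + μ) / |x + μ| ^ 3) - μ * (x + μ - 1) / |x + μ - 1| ^ 3
          - 3 / 2 * μ * A₂ * (x + μ - 1) / |x + μ - 1| ^ 5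
          - Mb * x / (x ^ 2 + T ^ 2) ^ ((3 : ℝ) / 2)) atBot (nhds 0) := by
      have h := ((hA1.neg.sub hB1).sub hC1).sub hD1
      rw [show (-(0:ℝ) - 0 - 0 - 0) = 0 from by norm_num] at h
      exact h
    have := hrest.add_atBot hlin
    refine this.congr fun x => ?_
    unfold fcol
    ring
  -- Part 3: atTop near -μ from the left
  have h3 : Tendsto (fcol μ q₁ A₂ Mb T n) (nhdsWithin (-μ) (Set.Iio (-μ))) atTop := by
    have hdom : Tendsto (fun x : ℝ => (1 - μ) * q₁ * ((x + μ) ^ 2)⁻¹)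
        (nhdsWithin (-μ) (Set.Iio (-μ))) atTop := by
      have h1 : Tendsto (fun x : ℝ => (x + μ) ^ 2) (nhdsWithin (-μ) (Set.Iio (-μ)))
          (nhdsWithin 0 (Set.Ioi 0)) := by
        refine tendsto_nhdsWithin_of_tendsto_nhds_of_eventually_within _ ?_ ?_
        · have hc : Continuous fun x : ℝ => (x + μ) ^ 2 := by fun_prop
          have := hc.tendsto (-μ)
          simp only [neg_add_cancel, ne_eq, OfNat.ofNat_ne_zero, not_false_eq_true,
            zero_pow] at this
          exact this.mono_left nhdsWithin_le_nhds
        · filter_upwards [self_mem_nhdsWithin] with x hx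
          have hx' : x < -μ := hx
          have hne : x + μ ≠ 0 := by intro h; nlinarith
          have : (0 : ℝ) < (x + μ) ^ 2 := by positivity
          exact this
      exact Tendsto.const_mul_atTop (by nlinarith) (tendsto_inv_nhdsGT_zero.comp h1)
    have hrestc : ContinuousAt (fun x : ℝ => n ^ 2 * x - μ * (x + μ - 1) / |x + μ - 1| ^ 3
        - 3 / 2 * μ * A₂ * (x + μ - 1) / |x + μ - 1| ^ 5
        - Mb * x / (x ^ 2 + T ^ 2) ^ ((3 : ℝ) / 2)) (-μ) := by
      have hab2 : |(-μ : ℝ) + μ - 1| ≠ 0 := by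
        rw [show (-μ : ℝ) + μ - 1 = -1 by ring]; norm_num
      have hden : (0 : ℝ) < ((-μ : ℝ) ^ 2 + T ^ 2) ^ ((3 : ℝ) / 2) :=
        Real.rpow_pos_of_pos (by positivity) _
      refine ContinuousAt.sub (ContinuousAt.sub (ContinuousAt.sub ?_ ?_) ?_) ?_
      · fun_prop
      · exact ContinuousAt.div (by fun_prop) (by fun_prop) (pow_ne_zero _ hab2)
      · exact ContinuousAt.div (by fun_prop) (by fun_prop) (pow_ne_zero _ hab2)
      · exact ContinuousAt.div (by fun_prop)
          (ContinuousAt.rpow_const (by fun_prop) (Or.inr (by norm_num))) (ne_of_gt hden)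
    have hrest := (hrestc.continuousWithinAt (s := Set.Iio (-μ))).tendsto
    have hsum := hdom.atTop_add hrest
    refine hsum.congr' ?_
    filter_upwards [self_mem_nhdsWithin] with x hx
    have hx' : x < -μ := hx
    have hu : x + μ < 0 := by linarith
    have hune : x + μ ≠ 0 := ne_of_lt hu
    have habs : |x + μ| = -(x + μ) := abs_of_neg hu
    have hAeq : (1 - μ) * q₁ * (x + μ) / |x + μ| ^ 3 = -((1 - μ) * q₁ * ((x + μ) ^ 2)⁻¹) := by
      rw [habs, show (-(x + μ)) ^ 3 = -((x + μ) ^ 2 * (x + μ)) from by ring, div_neg,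
        mul_div_assoc, div_mul_cancel_right₀ hune]
    unfold fcol
    rw [hAeq]
    ring
  -- Part 4: existence of a zero
  refine ⟨hcont, h2, h3, ?_⟩
  obtain ⟨a, ha0, haμ⟩ := ((h2.eventually (eventually_le_atBot 0)).and
    (eventually_lt_atBot (-μ))).exists
  have hne : (nhdsWithin (-μ) (Set.Iio (-μ))).NeBot := by
    exact nhdsLT_neBot (-μ)
  obtain ⟨b, hb0, hba, hbμ⟩ := ((h3.eventually (eventually_ge_atTop 0)).and
    (((eventually_gt_nhds haμ).filter_mono nhdsWithin_le_nhds).and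
      self_mem_nhdsWithin)).exists
  have hab : a ≤ b := le_of_lt hba
  have hsub : Set.Icc a b ⊆ Set.Iio (-μ) := fun y hy => lt_of_le_of_lt hy.2 hbμ
  have := intermediate_value_Icc hab (hcont.mono hsub)
  obtain ⟨x₃, hx₃, hfx₃⟩ := this ⟨ha0, hb0⟩
  exact ⟨x₃, lt_of_le_of_lt hx₃.2 hbμ, hfx₃⟩
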